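/- A norm ‖·‖ on the real vector space of n×n complex Hermitian matrices is weakly unitarily invariant (‖U*AU‖ = ‖A‖ for all unitary U) if and only if there exists a symmetric norm f on ℝⁿ with ‖A‖ = f(λ₁(A),…,λₙ(A)) for all Hermitian A. -/

import Mathlib

open Matrix Polynomial

namespace LewisAux

variable {n : ℕ}

lemma multiset_map_perm {α : Type*} (a : Fin n → α) (σ : Equiv.Perm (Fin n)) :
    Multiset.map (a ∘ σ) Finset.univ.val = Multiset.map a Finset.univ.val := by
  rw [← Multiset.map_map]
  congr 1
  have h : (Finset.univ.map σ.toEmbedding).val = Finset.univ.val :=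
    congrArg Finset.val (Finset.map_univ_equiv σ)
  simpa [Finset.map] using h

lemma exists_perm_comp (a b : Fin n → ℝ)
    (h : Multiset.map a Finset.univ.val = Multiset.map b Finset.univ.val) :
    ∃ σ : Equiv.Perm (Fin n), a = b ∘ σ := by
  set σa := Tuple.sort a
  set σb := Tuple.sort b
  have hmono : a ∘ σa = b ∘ σb := by
    have h1 : Multiset.map (a ∘ σa) Finset.univ.val = Multiset.map (b ∘ σb) Finset.univ.val := by
      rw [multiset_map_perm, multiset_map_perm, h]
    rw [Fin.univ_val_map, Fin.univ_val_map] at h1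
    have hperm : (List.ofFn (a ∘ σa)).Perm (List.ofFn (b ∘ σb)) := Multiset.coe_eq_coe.mp h1
    exact List.ofFn_injective (List.Perm.eq_of_sortedLE
      ((Tuple.monotone_sort a).sortedLE_ofFn) ((Tuple.monotone_sort b).sortedLE_ofFn) hperm)
  refine ⟨σa.symm.trans σb, funext fun i => ?_⟩
  have := congrFun hmono (σa.symm i)
  simpa using this

lemma charpoly_diagonal (d : Fin n → ℂ) :
    (Matrix.diagonal d).charpoly = ∏ i, (X - C (d i)) := by
  have hc : charmatrix (Matrix.diagonal d) = Matrix.diagonal fun i => X - C (d i) := by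
    ext i j
    by_cases hij : i = j
    · subst hij; simp [charmatrix_apply]
    · simp [charmatrix_apply, Matrix.diagonal_apply_ne _ hij]
  rw [Matrix.charpoly, hc, Matrix.det_diagonal]

lemma charpoly_conj (U A : Matrix (Fin n) (Fin n) ℂ) (hU : U ∈ Matrix.unitaryGroup (Fin n) ℂ) :
    (star U * A * U).charpoly = A.charpoly := by
  have hUU : star U * U = 1 := Matrix.mem_unitaryGroup_iff'.mp hU
  have key : charmatrix (star U * A * U)
      = (C : ℂ →+* ℂ[X]).mapMatrix (star U) * charmatrix A * (C : ℂ →+* ℂ[X]).mapMatrix U := by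
    unfold charmatrix
    rw [Matrix.mul_sub, Matrix.sub_mul]
    congr 1
    · have : (Matrix.scalar (Fin n) (X : ℂ[X])) = (X : ℂ[X]) • (1 : Matrix (Fin n) (Fin n) ℂ[X]) := by
        simp [Matrix.scalar_apply, Matrix.smul_one_eq_diagonal]
      rw [this, Matrix.mul_smul, Matrix.smul_mul, mul_one, ← _root_.map_mul, hUU,
        _root_.map_one]
    · rw [_root_.map_mul, _root_.map_mul]
  rw [Matrix.charpoly, Matrix.charpoly, key, Matrix.det_mul, Matrix.det_mul]
  have h1 : ((C : ℂ →+* ℂ[X]).mapMatrix (star U)).det = C (star U).det :=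
    ((C : ℂ →+* ℂ[X]).map_det (star U)).symm
  have h2 : ((C : ℂ →+* ℂ[X]).mapMatrix U).det = C U.det := ((C : ℂ →+* ℂ[X]).map_det U).symm
  have hone : C (star U).det * C U.det = 1 := by
    rw [← _root_.map_mul, ← Matrix.det_mul, hUU, Matrix.det_one, _root_.map_one]
  rw [h1, h2, mul_right_comm, hone, one_mul]

lemma charpoly_hermitian {A : Matrix (Fin n) (Fin n) ℂ} (hA : A.IsHermitian) :
    A.charpoly = ∏ i, (X - C ((hA.eigenvalues i : ℂ))) := by
  have h1 := charpoly_conj (hA.eigenvectorUnitary : Matrix (Fin n) (Fin n) ℂ) A hA.eigenvectorUnitary.2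
  rw [show star (hA.eigenvectorUnitary : Matrix (Fin n) (Fin n) ℂ) * A * (hA.eigenvectorUnitary : Matrix (Fin n) (Fin n) ℂ)
      = diagonal (RCLike.ofReal ∘ hA.eigenvalues) by
      have := hA.conjStarAlgAut_star_eigenvectorUnitary
      rwa [Unitary.conjStarAlgAut_apply, Unitary.coe_star, star_star] at this] at h1
  rw [← h1, charpoly_diagonal]
  rfl

lemma roots_prod (v : Fin n → ℂ) :
    (∏ i, (X - C (v i))).roots = Finset.univ.val.map v := by
  have : ∏ i, (X - C (v i)) = ((Finset.univ.val.map v).map fun a => X - C a).prod := by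
    rw [Multiset.map_map]; rfl
  rw [this, Polynomial.roots_multiset_prod_X_sub_C]

lemma eigs_multiset_eq {A B : Matrix (Fin n) (Fin n) ℂ} (hA : A.IsHermitian) (hB : B.IsHermitian)
    (hcp : A.charpoly = B.charpoly) :
    Multiset.map hA.eigenvalues Finset.univ.val = Multiset.map hB.eigenvalues Finset.univ.val := by
  have h1 : Finset.univ.val.map (fun i => ((hA.eigenvalues i : ℂ)))
      = Finset.univ.val.map (fun i => ((hB.eigenvalues i : ℂ))) := by
    rw [← roots_prod, ← roots_prod, ← charpoly_hermitian hA, ← charpoly_hermitian hB, hcp]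
  have h2 : Multiset.map (fun r : ℝ => (r : ℂ)) (Multiset.map hA.eigenvalues Finset.univ.val)
      = Multiset.map (fun r : ℝ => (r : ℂ)) (Multiset.map hB.eigenvalues Finset.univ.val) := by
    rw [Multiset.map_map, Multiset.map_map]; exact h1
  exact Multiset.map_injective Complex.ofReal_injective h2

lemma perm_conj_diagonal (σ : Equiv.Perm (Fin n)) (x : Fin n → ℝ) :
    ∃ U ∈ Matrix.unitaryGroup (Fin n) ℂ,
      star U * Matrix.diagonal (fun i => (x i : ℂ)) * U = Matrix.diagonal fun i => (x (σ i) : ℂ) := by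
  set P : Matrix (Fin n) (Fin n) ℂ := (σ⁻¹).toPEquiv.toMatrix with hP
  have hstar : star P = σ.toPEquiv.toMatrix := by
    rw [Matrix.star_eq_conjTranspose]
    have ht : Pᴴ = Pᵀ := by
      ext i j
      simp [hP, Matrix.conjTranspose_apply, PEquiv.toMatrix_apply,
        apply_ite (starRingEnd ℂ)]
    rw [ht, hP, ← PEquiv.toMatrix_symm, ← Equiv.toPEquiv_symm]
    congr 1
  have hmem : P ∈ Matrix.unitaryGroup (Fin n) ℂ := by
    rw [Matrix.mem_unitaryGroup_iff', hstar, hP, ← PEquiv.toMatrix_trans, ← Equiv.toPEquiv_trans]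
    rw [show σ.trans σ⁻¹ = Equiv.refl (Fin n) from Equiv.self_trans_symm σ,
      Equiv.toPEquiv_refl, PEquiv.toMatrix_refl]
  refine ⟨P, hmem, ?_⟩
  rw [hstar, hP, PEquiv.toMatrix_toPEquiv_mul, PEquiv.mul_toMatrix_toPEquiv,
    Matrix.submatrix_submatrix]
  have hgoal : (Matrix.diagonal fun i => (x i : ℂ)).submatrix ⇑σ ⇑σ
      = Matrix.diagonal fun i => (x (σ i) : ℂ) := by
    rw [Matrix.submatrix_diagonal_equiv]; rfl
  have hc1 : (⇑σ ∘ id : Fin n → Fin n) = ⇑σ := rfl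
  have hc2 : (id ∘ ⇑σ⁻¹.symm : Fin n → Fin n) = ⇑σ := by
    funext i; simp [Equiv.Perm.inv_def]
  rw [hc1, hc2, hgoal]

end LewisAux


/-- Lewis' classification: a norm on the Hermitian `n × n` matrices is weakly unitarily
invariant iff it is a symmetric norm on `ℝⁿ` applied to the eigenvalues. -/
theorem weakly_unitarily_invariant_iff_symmetric_norm_eigenvalues (n : ℕ)
    (N : Matrix (Fin n) (Fin n) ℂ → ℝ)
    (hnonneg : ∀ A : Matrix (Fin n) (Fin n) ℂ, A.IsHermitian → 0 ≤ N A)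
    (hdef : ∀ A : Matrix (Fin n) (Fin n) ℂ, A.IsHermitian → (N A = 0 ↔ A = 0))
    (hhom : ∀ (c : ℝ) (A : Matrix (Fin n) (Fin n) ℂ), A.IsHermitian →
      N ((c : ℂ) • A) = |c| * N A)
    (htri : ∀ A B : Matrix (Fin n) (Fin n) ℂ, A.IsHermitian → B.IsHermitian →
      N (A + B) ≤ N A + N B) :
    (∀ A : Matrix (Fin n) (Fin n) ℂ, A.IsHermitian →
        ∀ U ∈ Matrix.unitaryGroup (Fin n) ℂ, N (star U * A * U) = N A) ↔
      ∃ f : (Fin n → ℝ) → ℝ,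
        (∀ x, 0 ≤ f x) ∧ (∀ x, f x = 0 ↔ x = 0) ∧
        (∀ (c : ℝ) x, f (c • x) = |c| * f x) ∧
        (∀ x y, f (x + y) ≤ f x + f y) ∧
        (∀ (σ : Equiv.Perm (Fin n)) x, f (x ∘ σ) = f x) ∧
        (∀ (A : Matrix (Fin n) (Fin n) ℂ) (hA : A.IsHermitian),
          N A = f hA.eigenvalues) := by
  have hherm : ∀ x : Fin n → ℝ, (Matrix.diagonal fun i => ((x i : ℂ))).IsHermitian := by
    intro x
    rw [Matrix.IsHermitian, Matrix.diagonal_conjTranspose]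
    have hs : (star fun i => ((x i : ℝ) : ℂ)) = fun i => ((x i : ℝ) : ℂ) := by
      funext i
      simpa using Complex.conj_ofReal (x i)
    rw [hs]
  constructor
  · intro hinv
    refine ⟨fun x => N (Matrix.diagonal fun i => (x i : ℂ)), fun x => hnonneg _ (hherm x),
      ?_, ?_, ?_, ?_, ?_⟩
    · intro x
      rw [hdef _ (hherm x)]
      constructor
      · intro h
        funext i
        have := congrFun (congrFun h i) i
        simpa [Matrix.diagonal_apply_eq] using this
      · intro h; subst h; simp
    · intro c x
      have hx : (fun i => (((c • x) i : ℝ) : ℂ)) = (c : ℂ) • fun i => ((x i : ℝ) : ℂ) := by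
        funext i
        simp
      show N (Matrix.diagonal fun i => (((c • x) i : ℝ) : ℂ))
          = |c| * N (Matrix.diagonal fun i => ((x i : ℝ) : ℂ))
      rw [hx, Matrix.diagonal_smul]
      exact hhom c _ (hherm x)
    · intro x y
      have hx : (fun i => (((x + y) i : ℝ) : ℂ))
          = fun i => ((x i : ℝ) : ℂ) + ((y i : ℝ) : ℂ) := by
        funext i; simp
      show N (Matrix.diagonal fun i => (((x + y) i : ℝ) : ℂ))
          ≤ N (Matrix.diagonal fun i => ((x i : ℝ) : ℂ))
            + N (Matrix.diagonal fun i => ((y i : ℝ) : ℂ))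
      rw [hx, ← Matrix.diagonal_add]
      exact htri _ _ (hherm x) (hherm y)
    · intro σ x
      obtain ⟨U, hU, hc⟩ := LewisAux.perm_conj_diagonal σ x
      show N (Matrix.diagonal fun i => ((x (σ i) : ℝ) : ℂ)) = _
      rw [← hc, hinv _ (hherm x) U hU]
    · intro A hA
      have h1 := hinv A hA _ hA.eigenvectorUnitary.2
      rw [show star (hA.eigenvectorUnitary : Matrix (Fin n) (Fin n) ℂ) * A * (hA.eigenvectorUnitary : Matrix (Fin n) (Fin n) ℂ)
      = diagonal (RCLike.ofReal ∘ hA.eigenvalues) by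
      have := hA.conjStarAlgAut_star_eigenvectorUnitary
      rwa [Unitary.conjStarAlgAut_apply, Unitary.coe_star, star_star] at this] at h1
      rw [← h1]
      rfl
  · rintro ⟨f, -, -, -, -, hsymm, hf⟩ A hA U hU
    have hB : (star U * A * U).IsHermitian := by
      rw [Matrix.star_eq_conjTranspose]
      exact Matrix.isHermitian_conjTranspose_mul_mul U hA
    rw [hf _ hB, hf _ hA]
    obtain ⟨σ, hσ⟩ := LewisAux.exists_perm_comp _ _
      (LewisAux.eigs_multiset_eq hB hA (LewisAux.charpoly_conj U A hU))
    rw [hσ, hsymm]
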